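/- Let Q_n denote the hypercube graph on the vertex set Fin n → Bool, where two vertices are adjacent if and only if they differ in exactly one coordinate, and let A be its adjacency matrix over ℝ (or ℚ). Then charpoly(A) = ∏_{j=0}^{n} (X - C((n : ℝ) - 2j))^(Nat.choose n j); that is, the eigenvalues of Q_n are n - 2j with multiplicity binomial(n, j) for j = 0, …, n. -/

import Mathlib

open Polynomial

/-- The hypercube graph `Q_n` on `Fin n → Bool`: two vertices are adjacent iff they
differ in exactly one coordinate. -/
def hypercube (n : ℕ) : SimpleGraph (Fin n → Bool) where
  Adj u v := ∃! i, u i ≠ v i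
  symm := by
    constructor
    rintro u v ⟨i, hi, huniq⟩
    exact ⟨i, Ne.symm hi, fun j hj => huniq j (Ne.symm hj)⟩
  loopless := by
    constructor
    rintro u ⟨i, hi, -⟩
    exact hi rfl

noncomputable instance (n : ℕ) : DecidableRel (hypercube n).Adj := Classical.decRel _

namespace HypercubeAux

/-- weight of a vertex -/
def wt {n : ℕ} (S : Fin n → Bool) : ℕ := (Finset.univ.filter fun i => S i = true).card

/-- character matrix (Hadamard-type) -/
noncomputable def Hmat (n : ℕ) : Matrix (Fin n → Bool) (Fin n → Bool) ℝ :=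
  Matrix.of fun S u => ∏ i, if S i && u i then (-1 : ℝ) else 1

/-- diagonal eigenvalue matrix -/
noncomputable def Dmat (n : ℕ) : Matrix (Fin n → Bool) (Fin n → Bool) ℝ :=
  Matrix.diagonal fun S => (n : ℝ) - 2 * wt S

lemma H_mul_H (n : ℕ) : Hmat n * Hmat n = ((2 : ℝ) ^ n) • 1 := by
  ext S T
  rw [Matrix.mul_apply]
  have : ∀ u : Fin n → Bool,
      Hmat n S u * Hmat n u T = ∏ i, ((if S i && u i then (-1:ℝ) else 1) *
        (if u i && T i then (-1:ℝ) else 1)) := by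
    intro u
    simp only [Hmat, Matrix.of_apply]
    rw [← Finset.prod_mul_distrib]
  simp_rw [this]
  rw [← Fintype.prod_sum (fun i b => (if S i && b then (-1:ℝ) else 1) *
    (if b && T i then (-1:ℝ) else 1))]
  have h2 : ∀ i : Fin n, (∑ b : Bool, (if S i && b then (-1:ℝ) else 1) *
      (if b && T i then (-1:ℝ) else 1)) = if S i = T i then 2 else 0 := by
    intro i
    cases hS : S i <;> cases hT : T i <;> norm_num
  simp_rw [h2]
  by_cases hST : S = T
  · subst hST
    simp [Matrix.smul_apply, Finset.prod_ite_eq]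
  · obtain ⟨i, hi⟩ := Function.ne_iff.mp hST
    rw [Finset.prod_eq_zero (Finset.mem_univ i) (by simp [hi])]
    simp [Matrix.one_apply_ne hST, hST]


lemma neighborFinset_eq (n : ℕ) (u : Fin n → Bool) :
    (hypercube n).neighborFinset u =
      Finset.univ.image (fun i => Function.update u i (!u i)) := by
  ext v
  simp only [SimpleGraph.mem_neighborFinset, Finset.mem_image, Finset.mem_univ, true_and]
  constructor
  · rintro ⟨i, hi, huniq⟩
    refine ⟨i, funext fun j => ?_⟩
    rcases eq_or_ne j i with rfl | hj
    · rw [Function.update_self]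
      cases hu : u j <;> cases hv : v j <;> simp_all
    · rw [Function.update_of_ne hj]
      by_contra h
      exact hj (huniq j h)
  · rintro ⟨i, rfl⟩
    refine ⟨i, by simp, fun j hj => ?_⟩
    by_contra h
    exact hj (Function.update_of_ne h (!u i) u).symm

lemma update_inj (n : ℕ) (u : Fin n → Bool) {i j : Fin n}
    (h : Function.update u i (!u i) = Function.update u j (!u j)) : i = j := by
  by_contra hij
  have := congrFun h i
  rw [Function.update_self, Function.update_of_ne hij] at this
  simp at this

lemma H_update (n : ℕ) (S u : Fin n → Bool) (i : Fin n) :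
    Hmat n (Function.update u i (!u i)) S = (if S i then (-1:ℝ) else 1) * Hmat n u S := by
  simp only [Hmat, Matrix.of_apply]
  have key : (fun j => if (Function.update u i (!u i) j) && S j then (-1:ℝ) else 1) =
      Function.update (fun j => if u j && S j then (-1:ℝ) else 1) i
        (if (!u i) && S i then (-1:ℝ) else 1) := by
    funext j
    rcases eq_or_ne j i with rfl | hj
    · simp
    · rw [Function.update_of_ne hj, Function.update_of_ne hj]
  calc (∏ j, if (Function.update u i (!u i) j) && S j then (-1:ℝ) else 1)
      = ∏ j, Function.update (fun j => if u j && S j then (-1:ℝ) else 1) i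
        (if (!u i) && S i then (-1:ℝ) else 1) j := by rw [key]
    _ = (if (!u i) && S i then (-1:ℝ) else 1) *
        ∏ j ∈ Finset.univ.erase i, (if u j && S j then (-1:ℝ) else 1) := by
        rw [Finset.prod_update_of_mem (Finset.mem_univ i), Finset.sdiff_singleton_eq_erase]
    _ = (if S i then (-1:ℝ) else 1) * ((if u i && S i then (-1:ℝ) else 1) *
        ∏ j ∈ Finset.univ.erase i, (if u j && S j then (-1:ℝ) else 1)) := by
        rw [← mul_assoc]
        congr 1
        cases hu : u i <;> cases hS : S i <;> norm_num
    _ = (if S i then (-1:ℝ) else 1) * ∏ j, (if u j && S j then (-1:ℝ) else 1) := by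
        rw [Finset.mul_prod_erase Finset.univ
          (fun j => if (u j && S j) = true then (-1:ℝ) else 1) (Finset.mem_univ i)]

lemma sum_pm (n : ℕ) (S : Fin n → Bool) :
    (∑ i : Fin n, if S i then (-1:ℝ) else 1) = (n : ℝ) - 2 * wt S := by
  have : ∀ i : Fin n, (if S i then (-1:ℝ) else 1)
      = 1 - 2 * (if S i = true then (1:ℝ) else 0) := by
    intro i; cases h : S i <;> norm_num
  simp_rw [this]
  rw [Finset.sum_sub_distrib, Finset.sum_const, ← Finset.mul_sum, Finset.sum_boole, wt]
  simp [mul_comm]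

lemma A_mul_H (n : ℕ) :
    (hypercube n).adjMatrix ℝ * Hmat n = Hmat n * Dmat n := by
  ext u S
  rw [SimpleGraph.adjMatrix_mul_apply, neighborFinset_eq, Finset.sum_image
    (fun i _ j _ h => update_inj n u h)]
  simp_rw [H_update]
  rw [← Finset.sum_mul, sum_pm]
  rw [Dmat, Matrix.mul_diagonal]
  ring


lemma Hmat_inv (n : ℕ) : Hmat n * (((2:ℝ)^n)⁻¹ • Hmat n) = 1 := by
  rw [Matrix.mul_smul, H_mul_H, smul_smul, inv_mul_cancel₀ (by positivity), one_smul]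

lemma Hmat_inv' (n : ℕ) : (((2:ℝ)^n)⁻¹ • Hmat n) * Hmat n = 1 := by
  rw [Matrix.smul_mul, H_mul_H, smul_smul, inv_mul_cancel₀ (by positivity), one_smul]

lemma A_eq (n : ℕ) :
    (hypercube n).adjMatrix ℝ = Hmat n * Dmat n * (((2:ℝ)^n)⁻¹ • Hmat n) := by
  rw [← A_mul_H, Matrix.mul_assoc, Hmat_inv, Matrix.mul_one]

/-- charpoly is invariant under conjugation -/
lemma charpoly_conj {m : Type*} [Fintype m] [DecidableEq m]
    (P Q M : Matrix m m ℝ) (hPQ : P * Q = 1) (hQP : Q * P = 1) :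
    (P * M * Q).charpoly = M.charpoly := by
  have hmap : ∀ A B : Matrix m m ℝ, (C : ℝ →+* ℝ[X]).mapMatrix (A * B) =
      (C : ℝ →+* ℝ[X]).mapMatrix A * (C : ℝ →+* ℝ[X]).mapMatrix B := fun A B => map_mul _ A B
  have key : Matrix.charmatrix (P * M * Q) =
      (C : ℝ →+* ℝ[X]).mapMatrix P * Matrix.charmatrix M * (C : ℝ →+* ℝ[X]).mapMatrix Q := by
    rw [Matrix.charmatrix, Matrix.charmatrix, mul_sub, sub_mul, hmap, hmap]
    congr 1
    rw [Matrix.scalar_apply, ← Matrix.smul_one_eq_diagonal, Matrix.mul_smul, Matrix.smul_mul,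
      Matrix.mul_one, ← hmap, hPQ, map_one]
  rw [Matrix.charpoly, Matrix.charpoly, key, Matrix.det_mul, Matrix.det_mul]
  rw [mul_comm, ← mul_assoc, ← Matrix.det_mul, ← hmap, hQP]
  simp

lemma charpoly_diag {m : Type*} [Fintype m] [DecidableEq m] (d : m → ℝ) :
    (Matrix.diagonal d).charpoly = ∏ i, (X - C (d i)) := by
  have : Matrix.charmatrix (Matrix.diagonal d) = Matrix.diagonal fun i => X - C (d i) := by
    ext i j
    rcases eq_or_ne i j with rfl | h
    · simp
    · simp [Matrix.charmatrix_apply_ne _ _ _ h, Matrix.diagonal_apply_ne _ h,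
        Matrix.diagonal_apply_ne d h]
  rw [Matrix.charpoly, this, Matrix.det_diagonal]

lemma charpoly_A_eq_D (n : ℕ) :
    ((hypercube n).adjMatrix ℝ).charpoly = (Dmat n).charpoly := by
  rw [A_eq n]
  exact charpoly_conj _ _ _ (Hmat_inv n) (Hmat_inv' n)

lemma card_wt (n j : ℕ) :
    (Finset.univ.filter fun S : Fin n → Bool => wt S = j).card = n.choose j := by
  have h2 : (Finset.powersetCard j (Finset.univ : Finset (Fin n))).card = n.choose j := by
    rw [Finset.card_powersetCard, Finset.card_fin]
  rw [← h2]
  refine Finset.card_nbij' (fun S => Finset.univ.filter fun i => S i = true)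
    (fun T => fun i => decide (i ∈ T)) ?_ ?_ ?_ ?_
  · intro S hS
    simp only [Finset.mem_coe, Finset.mem_filter, Finset.mem_univ, true_and] at hS
    rw [Finset.mem_coe, Finset.mem_powersetCard]
    exact ⟨Finset.filter_subset _ _ |>.trans (Finset.subset_univ _), hS⟩
  · intro T hT
    rw [Finset.mem_coe, Finset.mem_powersetCard] at hT
    show (fun i => decide (i ∈ T)) ∈ Finset.univ.filter fun S : Fin n → Bool => wt S = j
    rw [Finset.mem_filter]
    simp only [Finset.mem_filter, Finset.mem_univ, true_and, wt]
    rw [← hT.2]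
    congr 1
    ext i
    simp
  · intro S _
    funext i
    simp
  · intro T _
    ext i
    simp

end HypercubeAux

theorem hypercube_charpoly (n : ℕ) :
    ((hypercube n).adjMatrix ℝ).charpoly =
      ∏ j ∈ Finset.range (n + 1), (X - C ((n : ℝ) - 2 * (j : ℝ))) ^ (n.choose j) := by
  open HypercubeAux in
  rw [charpoly_A_eq_D, Dmat, charpoly_diag]
  have hmaps : ∀ S : Fin n → Bool, S ∈ Finset.univ → wt S ∈ Finset.range (n + 1) := by
    intro S _
    rw [Finset.mem_range, Nat.lt_succ_iff, wt]
    exact (Finset.card_filter_le _ _).trans (by simp)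
  rw [← Finset.prod_fiberwise_of_maps_to hmaps
    (fun S => X - C ((n : ℝ) - 2 * (wt S : ℝ)))]
  refine Finset.prod_congr rfl fun j _ => ?_
  rw [Finset.prod_congr rfl (fun S hS => ?_), Finset.prod_const, card_wt]
  simp only [Finset.mem_filter] at hS
  rw [hS.2]
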